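/- arXiv:1107.3181 — 2 statements merged into one kernel-verified Lean document; each statement's English description precedes it below -/
import Mathlib

section
/- Let (X, μ) be a finite measure space, let 1 < p < 2, and let f, g : X → [0, ∞) be measurable functions such that g(x) > 0 for μ-almost every x. Then ∫_X f^{p−1} dμ ≤ (∫_X f² g^{p−2} dμ)^{(p−1)/2} · (∫_X g^{p} dμ)^{((2−p)(p−1))/(2p)} · μ(X)^{(3−p)/2 − ((2−p)(p−1))/(2p)}. (This two-step Hölder estimate, with exponents 2/(p−1) and then p(3−p)/((p−1)(2−p)), is the key inequality in the proof of the continuity of the homogenized map b in Lemma 3.6.) -/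
open MeasureTheory
open scoped ENNReal NNReal

/-- The two-step Hölder estimate (exponents `2/(p−1)` and `p(3−p)/((p−1)(2−p))`) used in
the proof of the continuity of the homogenized map `b`:
`∫ f^{p−1} ≤ (∫ f² g^{p−2})^{(p−1)/2} (∫ g^p)^{(2−p)(p−1)/(2p)} μ(X)^{(3−p)/2−(2−p)(p−1)/(2p)}`
on a finite measure space, for `1 < p < 2` and `g > 0` a.e. -/
theorem holder_two_step {X : Type*} [MeasurableSpace X] (μ : Measure X) [IsFiniteMeasure μ]
    (p : ℝ) (hp1 : 1 < p) (hp2 : p < 2) (f g : X → ℝ≥0)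
    (hf : Measurable f) (hg : Measurable g)
    (hgpos : ∀ᵐ x ∂μ, 0 < g x) :
    ∫⁻ x, (f x : ℝ≥0∞) ^ (p - 1) ∂μ ≤
      (∫⁻ x, (f x : ℝ≥0∞) ^ (2 : ℝ) * (g x : ℝ≥0∞) ^ (p - 2) ∂μ) ^ ((p - 1) / 2) *
        (∫⁻ x, (g x : ℝ≥0∞) ^ p ∂μ) ^ ((2 - p) * (p - 1) / (2 * p)) *
        (μ Set.univ) ^ ((3 - p) / 2 - (2 - p) * (p - 1) / (2 * p)) := by
  have h1 : (0:ℝ) < p - 1 := by linarith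
  have h2 : (0:ℝ) < 2 - p := by linarith
  have h3 : (0:ℝ) < 3 - p := by linarith
  have hp0 : (0:ℝ) < p := by linarith
  set F : X → ℝ≥0∞ := fun x => ((f x : ℝ≥0∞) ^ (2:ℝ) * (g x : ℝ≥0∞) ^ (p-2)) ^ ((p-1)/2)
    with hFdef
  set G : X → ℝ≥0∞ := fun x => (g x : ℝ≥0∞) ^ ((2-p)*(p-1)/2) with hGdef
  have hfm : Measurable fun x => (f x : ℝ≥0∞) := hf.coe_nnreal_ennreal
  have hgm : Measurable fun x => (g x : ℝ≥0∞) := hg.coe_nnreal_ennreal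
  have hFm : Measurable F := by
    apply Measurable.pow_const
    exact (hfm.pow_const _).mul (hgm.pow_const _)
  have hGm : Measurable G := hgm.pow_const _
  -- pointwise identity a.e.
  have key : ∀ᵐ x ∂μ, (f x : ℝ≥0∞) ^ (p-1) = (F * G) x := by
    filter_upwards [hgpos] with x hx
    have hg0 : (g x : ℝ≥0∞) ≠ 0 := by exact_mod_cast hx.ne'
    have hgt : (g x : ℝ≥0∞) ≠ ⊤ := ENNReal.coe_ne_top
    have e1 : 2 * ((p-1)/2) = p - 1 := by ring
    have e2 : (p-2) * ((p-1)/2) + (2-p)*(p-1)/2 = 0 := by ring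
    simp only [Pi.mul_apply, hFdef, hGdef]
    rw [ENNReal.mul_rpow_of_nonneg _ _ (by positivity : (0:ℝ) ≤ (p-1)/2),
      ← ENNReal.rpow_mul, ← ENNReal.rpow_mul, mul_assoc,
      ← ENNReal.rpow_add _ _ hg0 hgt, e1, e2, ENNReal.rpow_zero, mul_one]
  -- first Hölder
  have hpq : (2/(p-1)).HolderConjugate (2/(3-p)) := by
    rw [Real.holderConjugate_iff]
    constructor
    · rw [lt_div_iff₀ h1]; linarith
    · rw [inv_div, inv_div]; field_simp; ring
  have step1 := ENNReal.lintegral_mul_le_Lp_mul_Lq μ hpq hFm.aemeasurable hGm.aemeasurable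
  have hFe : ∀ x, F x ^ (2/(p-1)) = (f x : ℝ≥0∞) ^ (2:ℝ) * (g x : ℝ≥0∞) ^ (p-2) := by
    intro x
    rw [hFdef, ← ENNReal.rpow_mul]
    rw [show (p-1)/2 * (2/(p-1)) = 1 by field_simp, ENNReal.rpow_one]
  set s : ℝ := (2-p)*(p-1)/(3-p) with hs
  have hGe : ∀ x, G x ^ (2/(3-p)) = (g x : ℝ≥0∞) ^ s := by
    intro x
    rw [hGdef, ← ENNReal.rpow_mul, hs]
    congr 1
    field_simp
  -- second Hölder
  set r : ℝ := p*(3-p)/((2-p)*(p-1)) with hr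
  have hr1 : 1 < r := by
    rw [hr, lt_div_iff₀ (by positivity)]; nlinarith
  have hrq : r.HolderConjugate (r / (r-1)) := Real.HolderConjugate.conjExponent hr1
  have step2 := ENNReal.lintegral_mul_le_Lp_mul_Lq μ hrq
    ((hgm.pow_const s).aemeasurable) (aemeasurable_const (b := (1:ℝ≥0∞)))
  simp only [Pi.mul_apply, mul_one, ENNReal.one_rpow, lintegral_one, lintegral_const] at step2
  have hsr : ∀ x, ((g x : ℝ≥0∞) ^ s) ^ r = (g x : ℝ≥0∞) ^ p := by
    intro x
    rw [← ENNReal.rpow_mul]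
    congr 1
    rw [hs, hr]
    field_simp
  simp only [hsr] at step2
  -- exponent bookkeeping
  have hinv2 : 1 / (r / (r-1)) = 1 - 1/r := by
    have := hrq.inv_add_inv_eq_one
    rw [inv_eq_one_div, inv_eq_one_div] at this
    linarith
  have hrinv : 1/r = (2-p)*(p-1)/(p*(3-p)) := by
    rw [hr, one_div_div]
  calc ∫⁻ x, (f x : ℝ≥0∞) ^ (p-1) ∂μ
      = ∫⁻ x, (F * G) x ∂μ := lintegral_congr_ae key
    _ ≤ (∫⁻ x, F x ^ (2/(p-1)) ∂μ) ^ (1/(2/(p-1))) *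
        (∫⁻ x, G x ^ (2/(3-p)) ∂μ) ^ (1/(2/(3-p))) := step1
    _ = (∫⁻ x, (f x : ℝ≥0∞) ^ (2:ℝ) * (g x : ℝ≥0∞) ^ (p-2) ∂μ) ^ ((p-1)/2) *
        (∫⁻ x, (g x : ℝ≥0∞) ^ s ∂μ) ^ ((3-p)/2) := by
        simp only [hFe, hGe, one_div_div]
    _ ≤ (∫⁻ x, (f x : ℝ≥0∞) ^ (2:ℝ) * (g x : ℝ≥0∞) ^ (p-2) ∂μ) ^ ((p-1)/2) *
        ((∫⁻ x, (g x : ℝ≥0∞) ^ p ∂μ) ^ (1/r) * (μ Set.univ) ^ (1/(r/(r-1)))) ^ ((3-p)/2) := by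
        have := ENNReal.rpow_le_rpow step2 (by positivity : (0:ℝ) ≤ (3-p)/2)
        exact mul_le_mul_right this _
    _ = _ := by
        rw [ENNReal.mul_rpow_of_nonneg _ _ (by positivity : (0:ℝ) ≤ (3-p)/2),
          ← ENNReal.rpow_mul, ← ENNReal.rpow_mul, ← mul_assoc]
        have e3 : 1/r * ((3-p)/2) = (2-p)*(p-1)/(2*p) := by
          rw [hrinv]; field_simp
        have e4 : (1 - 1/r) * ((3-p)/2) = (3-p)/2 - (2-p)*(p-1)/(2*p) := by
          rw [hrinv]; field_simp
        rw [hinv2, e3, e4]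
end

section
/- Let (X, μ) be a finite measure space, n ≥ 1, σ > 0 and 1 < p ≤ 2. There exists a constant C > 0 (depending only on p and σ) such that for all measurable vector fields F, G : X → ℝⁿ with ∫_X |F|^p dμ < ∞ and ∫_X |G|^p dμ < ∞ one has ∫_X |F − G|^{p} dμ ≤ C (∫_X (1 + |F| + |G|)^{p} dμ)^{(2−p)/2} · (∫_X ⟨A_{σ,p}(F) − A_{σ,p}(G), F − G⟩ dμ)^{p/2}. (This is the integral estimate, combining strong monotonicity with Hölder's inequality, that begins the proof of the Corrector Theorem for exponents between 1 and 2.) -/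
open MeasureTheory Classical
open scoped ENNReal NNReal

/-- The power-law constitutive map `A_{σ,p}(ξ) = σ|ξ|^{p−2} ξ` (with `A(0) = 0`). -/
noncomputable def powerLaw (n : ℕ) (σ p : ℝ) (ξ : EuclideanSpace ℝ (Fin n)) :
    EuclideanSpace ℝ (Fin n) :=
  if ξ = 0 then 0 else (σ * ‖ξ‖ ^ (p - 2)) • ξ


lemma bern_aux {q u : ℝ} (hq0 : 0 < q) (hq1 : q ≤ 1) (hu0 : 0 < u) (hu1 : u ≤ 1) :
    u ^ q ≤ 1 + q * (u - 1) := by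
  have hv0 : 0 < u ^ q := Real.rpow_pos_of_pos hu0 q
  have h1q : 1 ≤ 1 / q := by rw [le_div_iff₀ hq0]; linarith
  have hB := one_add_mul_self_le_rpow_one_add (s := u ^ q - 1) (by linarith) h1q
  have hb : (1 : ℝ) + (u ^ q - 1) = u ^ q := by ring
  rw [hb] at hB
  have h2 : (u ^ q) ^ (1 / q) = u := by
    rw [one_div, Real.rpow_rpow_inv hu0.le (ne_of_gt hq0)]
  rw [h2] at hB
  have h3 := mul_le_mul_of_nonneg_left hB hq0.le
  have hq' : q * (1 / q) = 1 := by field_simp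
  nlinarith [h3, hq']

lemma aux1 {p : ℝ} (hp1 : 1 < p) {a b : ℝ} (ha : 0 < a) (hb : 0 < b) (hba : b ≤ a)
    (hp2 : p ≤ 2) :
    (p - 1) * (a ^ (p - 2) * (a - b)) ≤ a ^ (p - 1) - b ^ (p - 1) := by
  have hu0 : 0 < b / a := div_pos hb ha
  have hu1 : b / a ≤ 1 := (div_le_one ha).2 hba
  have hq0 : 0 < p - 1 := by linarith
  have hB := bern_aux hq0 (by linarith) hu0 hu1
  have hdiv : (b / a) ^ (p - 1) = b ^ (p - 1) / a ^ (p - 1) := Real.div_rpow hb.le ha.le _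
  have hApos : 0 < a ^ (p - 1) := Real.rpow_pos_of_pos ha _
  have key : b ^ (p - 1) ≤ (1 + (p - 1) * (b / a - 1)) * a ^ (p - 1) := by
    have h := mul_le_mul_of_nonneg_right hB hApos.le
    rwa [hdiv, div_mul_cancel₀ _ (ne_of_gt hApos)] at h
  have hA : a ^ (p - 1) = a ^ (p - 2) * a := by
    rw [show p - 1 = (p - 2) + 1 by ring, Real.rpow_add_one (ne_of_gt ha)]
  have h3 : (b / a - 1) * a ^ (p - 1) = a ^ (p - 2) * (b - a) := by
    rw [hA]; field_simp
  have h4 : (p - 1) * ((b / a - 1) * a ^ (p - 1)) = (p - 1) * (a ^ (p - 2) * (b - a)) := by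
    rw [h3]
  nlinarith [key, h4]

lemma core {p : ℝ} (hp1 : 1 < p) (hp2 : p ≤ 2) {a b t : ℝ} (ha : 0 < a) (hb : 0 < b)
    (hba : b ≤ a) (ht : t ≤ a * b) :
    (p - 1) / 2 * ((a + b) ^ (p - 2) * (a ^ 2 - 2 * t + b ^ 2)) ≤
      a ^ p + b ^ p - (a ^ (p - 2) + b ^ (p - 2)) * t := by
  have hx2 : 0 < a ^ (p - 2) := Real.rpow_pos_of_pos ha _
  have hy2 : 0 < b ^ (p - 2) := Real.rpow_pos_of_pos hb _
  have hP : 0 < (a + b) ^ (p - 2) := Real.rpow_pos_of_pos (by linarith) _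
  have hPx : (a + b) ^ (p - 2) ≤ a ^ (p - 2) :=
    Real.rpow_le_rpow_of_nonpos ha (by linarith) (by linarith)
  have hax : a ^ (p - 1) = a ^ (p - 2) * a := by
    rw [show p - 1 = (p - 2) + 1 by ring, Real.rpow_add_one (ne_of_gt ha)]
  have hbx : b ^ (p - 1) = b ^ (p - 2) * b := by
    rw [show p - 1 = (p - 2) + 1 by ring, Real.rpow_add_one (ne_of_gt hb)]
  have hap : a ^ p = a ^ (p - 2) * a * a := by
    rw [show p = (p - 2) + 1 + 1 by ring, Real.rpow_add_one (ne_of_gt ha),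
      Real.rpow_add_one (ne_of_gt ha)]; ring_nf
  have hbp : b ^ p = b ^ (p - 2) * b * b := by
    rw [show p = (p - 2) + 1 + 1 by ring, Real.rpow_add_one (ne_of_gt hb),
      Real.rpow_add_one (ne_of_gt hb)]; ring_nf
  have h1 := aux1 hp1 ha hb hba hp2
  rw [hax, hbx] at h1
  -- h1 : (p-1) * (a^(p-2) * (a-b)) ≤ a^(p-2)*a - b^(p-2)*b
  have k1 : (p - 1) * ((a + b) ^ (p - 2) * (a - b)) ≤ a ^ (p - 2) * a - b ^ (p - 2) * b := by
    nlinarith [mul_le_mul_of_nonneg_right hPx (sub_nonneg.2 hba)]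
  have k2 : (p - 1) * (a + b) ^ (p - 2) ≤ a ^ (p - 2) + b ^ (p - 2) := by
    nlinarith
  rw [hap, hbp]
  nlinarith [mul_le_mul_of_nonneg_right k1 (sub_nonneg.2 hba),
    mul_le_mul_of_nonneg_right k2 (sub_nonneg.2 ht),
    mul_nonneg (mul_nonneg (by linarith : (0:ℝ) ≤ p - 1) hP.le) (sq_nonneg (a - b))]

lemma key2 {n : ℕ} {σ p : ℝ} (hσ : 0 < σ) (hp1 : 1 < p) (hp2 : p ≤ 2)
    (ξ η : EuclideanSpace ℝ (Fin n)) (hne : ξ ≠ η) :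
    (p - 1) / 2 * σ * ((‖ξ‖ + ‖η‖) ^ (p - 2) * ‖ξ - η‖ ^ 2) ≤
      (inner ℝ (powerLaw n σ p ξ - powerLaw n σ p η) (ξ - η) : ℝ) := by
  by_cases hξ : ξ = 0
  · have hη : η ≠ 0 := by rintro rfl; exact hne hξ
    subst hξ
    have hb : 0 < ‖η‖ := norm_pos_iff.2 hη
    have hb2 : 0 < ‖η‖ ^ (p - 2) := Real.rpow_pos_of_pos hb _
    rw [powerLaw, powerLaw, if_pos rfl, if_neg hη]
    have hI : (inner ℝ ((0 : EuclideanSpace ℝ (Fin n)) - (σ * ‖η‖ ^ (p - 2)) • η)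
        ((0 : EuclideanSpace ℝ (Fin n)) - η) : ℝ) = σ * ‖η‖ ^ (p - 2) * ‖η‖ ^ 2 := by
      simp only [zero_sub, inner_neg_neg, real_inner_smul_left,
        real_inner_self_eq_norm_sq]
    rw [hI]
    simp only [norm_zero, zero_add, zero_sub, norm_neg]
    nlinarith [sq_nonneg ‖η‖, mul_pos hb2 (mul_pos hσ (mul_pos hb hb))]
  · by_cases hη : η = 0
    · subst hη
      have ha : 0 < ‖ξ‖ := norm_pos_iff.2 hξ
      have ha2 : 0 < ‖ξ‖ ^ (p - 2) := Real.rpow_pos_of_pos ha _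
      rw [powerLaw, powerLaw, if_pos rfl, if_neg hξ]
      have hI : (inner ℝ ((σ * ‖ξ‖ ^ (p - 2)) • ξ - (0 : EuclideanSpace ℝ (Fin n)))
          (ξ - (0 : EuclideanSpace ℝ (Fin n))) : ℝ) = σ * ‖ξ‖ ^ (p - 2) * ‖ξ‖ ^ 2 := by
        simp only [sub_zero, real_inner_smul_left, real_inner_self_eq_norm_sq]
      rw [hI]
      simp only [norm_zero, add_zero, sub_zero]
      nlinarith [sq_nonneg ‖ξ‖, mul_pos ha2 (mul_pos hσ (mul_pos ha ha))]
    · have ha : 0 < ‖ξ‖ := norm_pos_iff.2 hξ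
      have hb : 0 < ‖η‖ := norm_pos_iff.2 hη
      rw [powerLaw, powerLaw, if_neg hξ, if_neg hη]
      have expand : (inner ℝ ((σ * ‖ξ‖ ^ (p - 2)) • ξ - (σ * ‖η‖ ^ (p - 2)) • η) (ξ - η) : ℝ)
          = σ * (‖ξ‖ ^ (p - 2) * ‖ξ‖ ^ 2) -
            σ * (‖ξ‖ ^ (p - 2) + ‖η‖ ^ (p - 2)) * (inner ℝ ξ η : ℝ) +
            σ * (‖η‖ ^ (p - 2) * ‖η‖ ^ 2) := by
        simp only [inner_sub_left, inner_sub_right, real_inner_smul_left,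
          real_inner_self_eq_norm_sq, real_inner_comm η ξ]
        ring
      have hns : ‖ξ - η‖ ^ 2 = ‖ξ‖ ^ 2 - 2 * (inner ℝ ξ η : ℝ) + ‖η‖ ^ 2 :=
        norm_sub_sq_real ξ η
      have ht : (inner ℝ ξ η : ℝ) ≤ ‖ξ‖ * ‖η‖ := real_inner_le_norm ξ η
      have hap : ‖ξ‖ ^ p = ‖ξ‖ ^ (p - 2) * ‖ξ‖ ^ 2 := by
        rw [show p = (p - 2) + 2 by ring, Real.rpow_add ha, Real.rpow_two]; ring_nf
      have hbp : ‖η‖ ^ p = ‖η‖ ^ (p - 2) * ‖η‖ ^ 2 := by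
        rw [show p = (p - 2) + 2 by ring, Real.rpow_add hb, Real.rpow_two]; ring_nf
      rw [expand, hns]
      rcases le_total ‖η‖ ‖ξ‖ with h | h
      · have hc := core hp1 hp2 ha hb h ht
        rw [hap, hbp] at hc
        nlinarith [mul_le_mul_of_nonneg_left hc hσ.le]
      · have ht' : (inner ℝ ξ η : ℝ) ≤ ‖η‖ * ‖ξ‖ := by rw [mul_comm]; exact ht
        have hc := core hp1 hp2 hb ha h ht'
        rw [hap, hbp, add_comm ‖η‖ ‖ξ‖] at hc
        nlinarith [mul_le_mul_of_nonneg_left hc hσ.le]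

lemma key_pointwise {n : ℕ} {σ p : ℝ} (hσ : 0 < σ) (hp1 : 1 < p) (hp2 : p ≤ 2)
    (ξ η : EuclideanSpace ℝ (Fin n)) :
    (p - 1) / 2 * σ * ((1 + ‖ξ‖ + ‖η‖) ^ (p - 2) * ‖ξ - η‖ ^ 2) ≤
      (inner ℝ (powerLaw n σ p ξ - powerLaw n σ p η) (ξ - η) : ℝ) := by
  by_cases hne : ξ = η
  · simp [hne]
  · have hs : 0 < ‖ξ‖ + ‖η‖ := by
      by_contra hcon
      push_neg at hcon
      have h1 : ‖ξ‖ = 0 := le_antisymm (by nlinarith [norm_nonneg ξ, norm_nonneg η]) (norm_nonneg ξ)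
      have h2 : ‖η‖ = 0 := le_antisymm (by nlinarith [norm_nonneg ξ, norm_nonneg η]) (norm_nonneg η)
      rw [norm_eq_zero] at h1 h2
      exact hne (by rw [h1, h2])
    have hmono : (1 + ‖ξ‖ + ‖η‖) ^ (p - 2) ≤ (‖ξ‖ + ‖η‖) ^ (p - 2) :=
      Real.rpow_le_rpow_of_nonpos hs (by linarith) (by linarith)
    have hcσ : (0:ℝ) ≤ (p - 1) / 2 * σ := by nlinarith
    calc (p - 1) / 2 * σ * ((1 + ‖ξ‖ + ‖η‖) ^ (p - 2) * ‖ξ - η‖ ^ 2)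
        ≤ (p - 1) / 2 * σ * ((‖ξ‖ + ‖η‖) ^ (p - 2) * ‖ξ - η‖ ^ 2) :=
          mul_le_mul_of_nonneg_left (mul_le_mul_of_nonneg_right hmono (sq_nonneg _)) hcσ
      _ ≤ _ := key2 hσ hp1 hp2 ξ η hne

/-- The integral estimate combining strong monotonicity with Hölder's inequality that
begins the proof of the Corrector Theorem, for exponents `1 < p ≤ 2`. -/
theorem corrector_integral_estimate_sublinear {X : Type*} [MeasurableSpace X]
    (μ : Measure X) [IsFiniteMeasure μ]
    (n : ℕ) (hn : 1 ≤ n) (σ p : ℝ) (hσ : 0 < σ) (hp1 : 1 < p) (hp2 : p ≤ 2) :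
    ∃ C : ℝ, 0 < C ∧ ∀ F G : X → EuclideanSpace ℝ (Fin n),
      Measurable F → Measurable G →
      (∫⁻ x, (‖F x‖₊ : ℝ≥0∞) ^ p ∂μ) < ⊤ →
      (∫⁻ x, (‖G x‖₊ : ℝ≥0∞) ^ p ∂μ) < ⊤ →
      ∫⁻ x, (‖F x - G x‖₊ : ℝ≥0∞) ^ p ∂μ ≤
        ENNReal.ofReal C *
          (∫⁻ x, ENNReal.ofReal (1 + ‖F x‖ + ‖G x‖) ^ p ∂μ) ^ ((2 - p) / 2) *
          (∫⁻ x, ENNReal.ofReal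
            (inner ℝ (powerLaw n σ p (F x) - powerLaw n σ p (G x)) (F x - G x) : ℝ) ∂μ) ^ (p / 2) := by
  have hK0 : (0:ℝ) < 2 / ((p - 1) * σ) := by
    apply div_pos two_pos (mul_pos (by linarith) hσ)
  set K : ℝ := 2 / ((p - 1) * σ) with hKdef
  refine ⟨K ^ (p / 2), Real.rpow_pos_of_pos hK0 _, ?_⟩
  intro F G hF hG _ _
  have hBpos : ∀ x, (0:ℝ) < 1 + ‖F x‖ + ‖G x‖ := fun x => by positivity
  have hB0 : ∀ x, ENNReal.ofReal (1 + ‖F x‖ + ‖G x‖) ≠ 0 :=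
    fun x => (ENNReal.ofReal_pos.2 (hBpos x)).ne'
  -- pointwise factorization
  have hfact : ∀ x, (‖F x - G x‖₊ : ℝ≥0∞) ^ p
      = ((‖F x - G x‖₊ : ℝ≥0∞) ^ (2:ℝ) *
          ENNReal.ofReal (1 + ‖F x‖ + ‖G x‖) ^ (p - 2)) ^ (p / 2)
        * (ENNReal.ofReal (1 + ‖F x‖ + ‖G x‖) ^ p) ^ ((2 - p) / 2) := by
    intro x
    rw [ENNReal.mul_rpow_of_nonneg _ _ (by positivity : (0:ℝ) ≤ p / 2),
      ← ENNReal.rpow_mul, ← ENNReal.rpow_mul, ← ENNReal.rpow_mul, mul_assoc,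
      ← ENNReal.rpow_add _ _ (hB0 x) ENNReal.ofReal_ne_top,
      show (2:ℝ) * (p / 2) = p by ring,
      show (p - 2) * (p / 2) + p * ((2 - p) / 2) = 0 by ring,
      ENNReal.rpow_zero, mul_one]
  -- measurability
  have hDm : Measurable fun x => (‖F x - G x‖₊ : ℝ≥0∞) := (hF.sub hG).nnnorm.coe_nnreal_ennreal
  have hBm : Measurable fun x => ENNReal.ofReal (1 + ‖F x‖ + ‖G x‖) :=
    ((measurable_const.add hF.norm).add hG.norm).ennreal_ofReal
  -- Hölder
  have step2 := ENNReal.lintegral_mul_norm_pow_le (μ := μ)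
    (f := fun x => (‖F x - G x‖₊ : ℝ≥0∞) ^ (2:ℝ) *
      ENNReal.ofReal (1 + ‖F x‖ + ‖G x‖) ^ (p - 2))
    (g := fun x => ENNReal.ofReal (1 + ‖F x‖ + ‖G x‖) ^ p)
    ((hDm.pow_const _).mul (hBm.pow_const _)).aemeasurable
    (hBm.pow_const _).aemeasurable
    (by positivity : (0:ℝ) ≤ p / 2) (by linarith : (0:ℝ) ≤ (2 - p) / 2) (by ring)
  -- pointwise bound on the first Hölder factor
  have hpoint : ∀ x, (‖F x - G x‖₊ : ℝ≥0∞) ^ (2:ℝ) *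
      ENNReal.ofReal (1 + ‖F x‖ + ‖G x‖) ^ (p - 2) ≤
      ENNReal.ofReal K * ENNReal.ofReal
        (inner ℝ (powerLaw n σ p (F x) - powerLaw n σ p (G x)) (F x - G x) : ℝ) := by
    intro x
    have hkey := key_pointwise hσ hp1 hp2 (F x) (G x)
    have hreal : ‖F x - G x‖ ^ 2 * (1 + ‖F x‖ + ‖G x‖) ^ (p - 2) ≤
        K * (inner ℝ (powerLaw n σ p (F x) - powerLaw n σ p (G x)) (F x - G x) : ℝ) := by
      have h1 := mul_le_mul_of_nonneg_left hkey hK0.le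
      have hm : (p - 1) * σ ≠ 0 := ne_of_gt (mul_pos (by linarith) hσ)
      have h2 : K * ((p - 1) / 2 * σ) = 1 := by
        rw [hKdef, div_mul_eq_mul_div, div_eq_one_iff_eq hm]; ring
      have h3 : K * ((p - 1) / 2 * σ * ((1 + ‖F x‖ + ‖G x‖) ^ (p - 2) * ‖F x - G x‖ ^ 2)) =
          ‖F x - G x‖ ^ 2 * (1 + ‖F x‖ + ‖G x‖) ^ (p - 2) := by
        linear_combination ((1 + ‖F x‖ + ‖G x‖) ^ (p - 2) * ‖F x - G x‖ ^ 2) * h2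
      rw [← h3]; exact h1
    calc (‖F x - G x‖₊ : ℝ≥0∞) ^ (2:ℝ) * ENNReal.ofReal (1 + ‖F x‖ + ‖G x‖) ^ (p - 2)
        = ENNReal.ofReal (‖F x - G x‖ ^ 2 * (1 + ‖F x‖ + ‖G x‖) ^ (p - 2)) := by
          rw [← enorm_eq_nnnorm, ← ofReal_norm,
            ENNReal.ofReal_rpow_of_nonneg (norm_nonneg _) (by norm_num : (0:ℝ) ≤ 2),
            ENNReal.ofReal_rpow_of_pos (hBpos x), Real.rpow_two,
            ← ENNReal.ofReal_mul (by positivity)]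
      _ ≤ ENNReal.ofReal (K * (inner ℝ (powerLaw n σ p (F x) - powerLaw n σ p (G x))
            (F x - G x) : ℝ)) := ENNReal.ofReal_le_ofReal hreal
      _ = ENNReal.ofReal K * ENNReal.ofReal _ := ENNReal.ofReal_mul hK0.le
  have step3 : (∫⁻ x, (‖F x - G x‖₊ : ℝ≥0∞) ^ (2:ℝ) *
        ENNReal.ofReal (1 + ‖F x‖ + ‖G x‖) ^ (p - 2) ∂μ) ≤
      ENNReal.ofReal K * ∫⁻ x, ENNReal.ofReal
        (inner ℝ (powerLaw n σ p (F x) - powerLaw n σ p (G x)) (F x - G x) : ℝ) ∂μ := by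
    calc _ ≤ ∫⁻ x, ENNReal.ofReal K * ENNReal.ofReal
          (inner ℝ (powerLaw n σ p (F x) - powerLaw n σ p (G x)) (F x - G x) : ℝ) ∂μ :=
        lintegral_mono hpoint
      _ = _ := lintegral_const_mul' _ _ ENNReal.ofReal_ne_top
  have step4 : (∫⁻ x, (‖F x - G x‖₊ : ℝ≥0∞) ^ (2:ℝ) *
        ENNReal.ofReal (1 + ‖F x‖ + ‖G x‖) ^ (p - 2) ∂μ) ^ (p / 2) ≤
      ENNReal.ofReal (K ^ (p / 2)) * (∫⁻ x, ENNReal.ofReal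
        (inner ℝ (powerLaw n σ p (F x) - powerLaw n σ p (G x)) (F x - G x) : ℝ) ∂μ) ^ (p / 2) := by
    calc _ ≤ (ENNReal.ofReal K * ∫⁻ x, ENNReal.ofReal
          (inner ℝ (powerLaw n σ p (F x) - powerLaw n σ p (G x)) (F x - G x) : ℝ) ∂μ) ^ (p / 2) :=
        ENNReal.rpow_le_rpow step3 (by positivity)
      _ = _ := by
        rw [ENNReal.mul_rpow_of_nonneg _ _ (by positivity : (0:ℝ) ≤ p / 2),
          ENNReal.ofReal_rpow_of_pos hK0]
  calc ∫⁻ x, (‖F x - G x‖₊ : ℝ≥0∞) ^ p ∂μ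
      = ∫⁻ x, ((‖F x - G x‖₊ : ℝ≥0∞) ^ (2:ℝ) *
          ENNReal.ofReal (1 + ‖F x‖ + ‖G x‖) ^ (p - 2)) ^ (p / 2)
        * (ENNReal.ofReal (1 + ‖F x‖ + ‖G x‖) ^ p) ^ ((2 - p) / 2) ∂μ :=
      lintegral_congr hfact
    _ ≤ (∫⁻ x, (‖F x - G x‖₊ : ℝ≥0∞) ^ (2:ℝ) *
          ENNReal.ofReal (1 + ‖F x‖ + ‖G x‖) ^ (p - 2) ∂μ) ^ (p / 2)
        * (∫⁻ x, ENNReal.ofReal (1 + ‖F x‖ + ‖G x‖) ^ p ∂μ) ^ ((2 - p) / 2) := step2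
    _ ≤ (ENNReal.ofReal (K ^ (p / 2)) * (∫⁻ x, ENNReal.ofReal
          (inner ℝ (powerLaw n σ p (F x) - powerLaw n σ p (G x)) (F x - G x) : ℝ) ∂μ) ^ (p / 2))
        * (∫⁻ x, ENNReal.ofReal (1 + ‖F x‖ + ‖G x‖) ^ p ∂μ) ^ ((2 - p) / 2) :=
      mul_le_mul_left step4 _
    _ = _ := by ring
end
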